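/- Let K be a field and let A be a skew PBW extension of K in variables x_1, …, x_n such that A is a K-algebra (k·a = a·k for all k ∈ K, a ∈ A), and let c_{i,j} ∈ K ∖ {0} (1 ≤ i < j ≤ n) be the constants with x_j x_i − c_{i,j} x_i x_j ∈ K + Kx_1 + ⋯ + Kx_n. Regard A as a finitely semi-graded K-algebra with A_k the K-span of the monomials x^α with |α| = k, and let P(A) be its set of isomorphism classes of point modules and ∼ the relation [M] ∼ [M'] iff Gr(M) ≅ Gr(M') as graded Gr(A)-modules. Then there exists an injective function from P(A)/∼ into the set X_2 := {([v],[w]) ∈ ℙ^{n−1}(K) × ℙ^{n−1}(K) : v_j w_i = c_{i,j} v_i w_j for all 1 ≤ i < j ≤ n}; in particular there exists m_0 ≥ 1 (namely m_0 = 2) and an injective function from P(A)/∼ to X_{m_0}. -/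

import Mathlib

universe u v

section

variable {K : Type u} {B : Type v} [Field K] [Ring B] [Algebra K B]

/-- The standard filtration `F_n = (deg 0) ⊕ ⋯ ⊕ (deg n)` associated to a
semi-graduation of a `K`-module. -/
def sgFilt {M : Type*} [AddCommGroup M] [Module K M]
    (deg : ℕ → Submodule K M) (n : ℕ) : Submodule K M :=
  ⨆ k ∈ Set.Iic n, deg k

/-- `F_{n−1}`, with `F_{−1} = 0`. -/
def sgFiltPrev {M : Type*} [AddCommGroup M] [Module K M]
    (deg : ℕ → Submodule K M) : ℕ → Submodule K M
  | 0 => ⊥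
  | (n + 1) => sgFilt deg n

/-- A point module for a finitely semi-graded `K`-algebra `B` with semi-graduation
`Bdeg`. -/
structure SGPointModule (Bdeg : ℕ → Submodule K B) where
  M : Type v
  [acg : AddCommGroup M]
  [modK : Module K M]
  [modB : Module B M]
  [tower : IsScalarTower K B M]
  deg : ℕ → Submodule K M
  internal : DirectSum.IsInternal deg
  smul_le : ∀ p q : ℕ, ∀ b ∈ Bdeg p, ∀ v ∈ deg q, b • v ∈ ⨆ k ∈ Set.Iic (p + q), deg k
  cyclic : ∃ v ∈ deg 0, Submodule.span B {v} = ⊤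
  dim_one : ∀ n : ℕ, Module.finrank K (deg n) = 1

attribute [instance] SGPointModule.acg SGPointModule.modK SGPointModule.modB
  SGPointModule.tower

/-- The degree-`n` piece `F_n(M)/F_{n−1}(M)` of the associated graded module of a
point module. -/
abbrev SGPointModule.GrQuot {Bdeg : ℕ → Submodule K B} (P : SGPointModule Bdeg) (n : ℕ) :=
  (sgFilt P.deg n) ⧸ ((sgFiltPrev P.deg n).comap (sgFilt P.deg n).subtype)

/-- `Gr(M) ≅ Gr(M')` as graded `Gr(B)`-modules: a family of `K`-linear isomorphisms
`F_n(M)/F_{n−1}(M) ≃ F_n(M')/F_{n−1}(M')` compatible with the `Gr(B)`-action induced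
by the `B`-action on representatives. -/
def SGPointModule.GrIso {Bdeg : ℕ → Submodule K B} (P P' : SGPointModule Bdeg) : Prop :=
  ∃ g : ∀ n : ℕ, P.GrQuot n ≃ₗ[K] P'.GrQuot n,
    ∀ (p n : ℕ) (b : B) (hb : b ∈ sgFilt Bdeg p) (m : P.M) (hm : m ∈ sgFilt P.deg n)
      (m' : P'.M) (hm' : m' ∈ sgFilt P'.deg n),
      g n (Submodule.Quotient.mk ⟨m, hm⟩) = Submodule.Quotient.mk ⟨m', hm'⟩ →
      ∀ (h₁ : b • m ∈ sgFilt P.deg (p + n)) (h₂ : b • m' ∈ sgFilt P'.deg (p + n)),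
        g (p + n) (Submodule.Quotient.mk ⟨b • m, h₁⟩) =
          Submodule.Quotient.mk ⟨b • m', h₂⟩

end

/-- The ordered monomial `x₁^{α₁} ⋯ xₙ^{αₙ}`. -/
def skewPBWMonomial {A : Type*} [Ring A] {n : ℕ} (x : Fin n → A) (α : Fin n → ℕ) : A :=
  (List.ofFn fun i => x i ^ α i).prod

/-- The semi-graduation of a skew PBW extension of the field `K`: `A_k` is the `K`-span
of the standard monomials of total degree `k`. -/
def skewPBWDegK (K : Type u) {A : Type v} [Field K] [Ring A] [Algebra K A] {n : ℕ}
    (x : Fin n → A) (k : ℕ) : Submodule K A :=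
  Submodule.span K {a | ∃ α : Fin n → ℕ, (∑ i, α i) = k ∧ a = skewPBWMonomial x α}
section Infra

variable {K : Type u} {B : Type v} [Field K] [Ring B] [Algebra K B]
variable {M : Type*} [AddCommGroup M] [Module K M] (deg : ℕ → Submodule K M)

theorem sgFilt_mono {m n : ℕ} (h : m ≤ n) : sgFilt (K := K) deg m ≤ sgFilt deg n :=
  biSup_mono fun _ hk => le_trans hk h

theorem deg_le_sgFilt {k n : ℕ} (h : k ≤ n) : deg k ≤ sgFilt (K := K) deg n :=
  le_biSup deg h

theorem sgFilt_zero : sgFilt (K := K) deg 0 = deg 0 := by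
  apply le_antisymm
  · refine iSup₂_le fun k hk => ?_
    simp only [Set.mem_Iic, Nat.le_zero] at hk
    subst hk; exact le_rfl
  · exact deg_le_sgFilt deg le_rfl

theorem sgFilt_succ (n : ℕ) :
    sgFilt (K := K) deg (n + 1) = sgFilt deg n ⊔ deg (n + 1) := by
  apply le_antisymm
  · refine iSup₂_le fun k hk => ?_
    simp only [Set.mem_Iic] at hk
    rcases Nat.lt_or_ge k (n+1) with h | h
    · exact le_trans (deg_le_sgFilt deg (Nat.lt_succ_iff.mp h)) le_sup_left
    · have : k = n + 1 := le_antisymm hk h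
      subst this; exact le_sup_right
  · exact sup_le (sgFilt_mono deg (Nat.le_succ n)) (deg_le_sgFilt deg le_rfl)

theorem sgFiltPrev_le (n : ℕ) : sgFiltPrev (K := K) deg n ≤ sgFilt deg n := by
  cases n with
  | zero => exact bot_le
  | succ m => exact sgFilt_mono deg (Nat.le_succ m)

end Infra

section PM

variable {K : Type u} {B : Type v} [Field K] [Ring B] [Algebra K B]
variable {Bdeg : ℕ → Submodule K B} (P : SGPointModule Bdeg)

namespace SGPointModule

theorem ksmul_comm (a : B) (k : K) (m : P.M) : a • (k • m) = k • (a • m) := by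
  rw [← algebraMap_smul B k m, ← mul_smul, ← Algebra.commutes, mul_smul,
    algebraMap_smul]

theorem smul_deg_mem_sgFilt {p : ℕ} {b : B} (hb : b ∈ Bdeg p) (q : ℕ) {m : P.M}
    (hm : m ∈ sgFilt P.deg q) : b • m ∈ sgFilt P.deg (p + q) := by
  induction q generalizing m with
  | zero =>
    rw [sgFilt_zero] at hm
    exact P.smul_le p 0 b hb m hm
  | succ q ih =>
    rw [sgFilt_succ] at hm
    rcases Submodule.mem_sup.mp hm with ⟨f, hf, d, hd, rfl⟩
    rw [smul_add]
    exact Submodule.add_mem _ (sgFilt_mono P.deg (by omega) (ih hf))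
      (P.smul_le p (q+1) b hb d hd)

theorem smul_mem_sgFilt {p : ℕ} {b : B} (hb : b ∈ sgFilt Bdeg p) (q : ℕ) {m : P.M}
    (hm : m ∈ sgFilt P.deg q) : b • m ∈ sgFilt P.deg (p + q) := by
  induction p generalizing b with
  | zero =>
    rw [sgFilt_zero] at hb
    exact P.smul_deg_mem_sgFilt hb q hm
  | succ p ih =>
    rw [sgFilt_succ] at hb
    rcases Submodule.mem_sup.mp hb with ⟨f, hf, d, hd, rfl⟩
    rw [add_smul]
    exact Submodule.add_mem _ (sgFilt_mono P.deg (by omega) (ih hf))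
      (P.smul_deg_mem_sgFilt hd q hm)

theorem smul_mem_sgFiltPrev {p : ℕ} {b : B} (hb : b ∈ sgFilt Bdeg p) (N : ℕ) {m : P.M}
    (hm : m ∈ sgFiltPrev P.deg N) : b • m ∈ sgFiltPrev P.deg (p + N) := by
  cases N with
  | zero =>
    have : m = 0 := by simpa [sgFiltPrev] using hm
    subst this
    simp [sgFiltPrev, smul_zero]
  | succ j =>
    exact P.smul_mem_sgFilt hb j hm

theorem exists_e (N : ℕ) : ∃ m : P.M, m ∈ P.deg N ∧ m ≠ 0 := by
  have h1 := P.dim_one N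
  have : Nontrivial (P.deg N) := by
    apply Module.nontrivial_of_finrank_pos (R := K)
    omega
  obtain ⟨v, hv⟩ := exists_ne (0 : P.deg N)
  exact ⟨v.1, v.2, fun h => hv (Subtype.ext h)⟩

noncomputable def e (N : ℕ) : P.M := (P.exists_e N).choose

theorem e_mem (N : ℕ) : P.e N ∈ P.deg N := (P.exists_e N).choose_spec.1

theorem e_ne (N : ℕ) : P.e N ≠ 0 := (P.exists_e N).choose_spec.2

theorem e_memF (N : ℕ) : P.e N ∈ sgFilt P.deg N :=
  deg_le_sgFilt P.deg le_rfl (P.e_mem N)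

theorem deg_smul_e {N : ℕ} {m : P.M} (hm : m ∈ P.deg N) : ∃ c : K, m = c • P.e N := by
  have h1 := P.dim_one N
  have hv : (⟨P.e N, P.e_mem N⟩ : P.deg N) ≠ 0 := by
    intro h
    exact P.e_ne N (congrArg Subtype.val h)
  obtain ⟨c, hc⟩ := (finrank_eq_one_iff_of_nonzero' _ hv).mp h1 ⟨m, hm⟩
  exact ⟨c, by simpa [Subtype.ext_iff] using hc.symm⟩

theorem e_not_prev (N : ℕ) : P.e N ∉ sgFiltPrev P.deg N := by
  intro h
  have hind := P.internal.submodule_iSupIndep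
  have hle : sgFiltPrev P.deg N ≤ ⨆ j, ⨆ (_ : j ≠ N), P.deg j := by
    cases N with
    | zero => exact bot_le
    | succ k =>
      refine iSup₂_le fun j hj => ?_
      simp only [Set.mem_Iic] at hj
      exact le_iSup₂ (f := fun j (_ : j ≠ k+1) => P.deg j) j (by omega)
  have := (hind N).le_bot ⟨P.e_mem N, hle h⟩
  exact P.e_ne N this

/-- The class of `e N` in `GrQuot N`. -/
noncomputable def mkE (N : ℕ) : P.GrQuot N :=
  Submodule.Quotient.mk ⟨P.e N, P.e_memF N⟩

theorem mkE_ne (N : ℕ) : P.mkE N ≠ 0 := by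
  intro h
  rw [mkE, Submodule.Quotient.mk_eq_zero, Submodule.mem_comap] at h
  exact P.e_not_prev N h

theorem mk_sub_mem {N : ℕ} {m m' : P.M} (hm : m ∈ sgFilt P.deg N) (hm' : m' ∈ sgFilt P.deg N) :
    (Submodule.Quotient.mk ⟨m, hm⟩ : P.GrQuot N) = Submodule.Quotient.mk ⟨m', hm'⟩ ↔
      m - m' ∈ sgFiltPrev P.deg N := by
  rw [Submodule.Quotient.eq]
  rfl

noncomputable def uIso (N : ℕ) : K ≃ₗ[K] P.GrQuot N := by
  refine LinearEquiv.ofBijective (LinearMap.toSpanSingleton K _ (P.mkE N)) ⟨?_, ?_⟩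
  · intro a b hab
    simp only [LinearMap.toSpanSingleton_apply] at hab
    have : (a - b) • P.mkE N = 0 := by rw [sub_smul, hab, sub_self]
    rcases smul_eq_zero.mp this with h | h
    · exact sub_eq_zero.mp h
    · exact absurd h (P.mkE_ne N)
  · intro q
    obtain ⟨⟨m, hm⟩, rfl⟩ := Submodule.Quotient.mk_surjective _ q
    have : ∃ d ∈ P.deg N, m - d ∈ sgFiltPrev P.deg N := by
      cases N with
      | zero =>
        rw [sgFilt_zero] at hm
        exact ⟨m, hm, by simp [sgFiltPrev]⟩
      | succ k =>
        rw [sgFilt_succ] at hm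
        rcases Submodule.mem_sup.mp hm with ⟨f, hf, d, hd, rfl⟩
        exact ⟨d, hd, by simpa [sgFiltPrev] using hf⟩
    obtain ⟨d, hd, hmd⟩ := this
    obtain ⟨c, rfl⟩ := P.deg_smul_e hd
    refine ⟨c, ?_⟩
    rw [LinearMap.toSpanSingleton_apply]
    have hce : c • P.e N ∈ sgFilt P.deg N := Submodule.smul_mem _ _ (P.e_memF N)
    have : c • P.mkE N = (Submodule.Quotient.mk ⟨c • P.e N, hce⟩ : P.GrQuot N) := rfl
    rw [this, P.mk_sub_mem]
    simpa using Submodule.neg_mem _ hmd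

/-- coefficient of the class of `m` w.r.t. the basis `mkE N` of `GrQuot N`. -/
noncomputable def cv (N : ℕ) (m : P.M) (hm : m ∈ sgFilt P.deg N) : K :=
  (P.uIso N).symm (Submodule.Quotient.mk ⟨m, hm⟩)

theorem cv_eq_iff {N : ℕ} {m : P.M} {hm : m ∈ sgFilt P.deg N} {c : K} :
    P.cv N m hm = c ↔ m - c • P.e N ∈ sgFiltPrev P.deg N := by
  have huc : (P.uIso N) c =
      Submodule.Quotient.mk ⟨c • P.e N, Submodule.smul_mem _ _ (P.e_memF N)⟩ := rfl
  rw [cv, LinearEquiv.symm_apply_eq, huc, P.mk_sub_mem]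

theorem cv_spec {N : ℕ} {m : P.M} (hm : m ∈ sgFilt P.deg N) :
    m - P.cv N m hm • P.e N ∈ sgFiltPrev P.deg N :=
  P.cv_eq_iff.mp rfl

theorem cv_e (N : ℕ) : P.cv N (P.e N) (P.e_memF N) = 1 := by
  rw [cv_eq_iff, one_smul, sub_self]
  exact Submodule.zero_mem _

theorem cv_of_mem_prev {N : ℕ} {m : P.M} (hm : m ∈ sgFilt P.deg N)
    (h : m ∈ sgFiltPrev P.deg N) : P.cv N m hm = 0 := by
  rw [cv_eq_iff, zero_smul, sub_zero]
  exact h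

theorem cv_eq_zero_iff {N : ℕ} {m : P.M} (hm : m ∈ sgFilt P.deg N) :
    P.cv N m hm = 0 ↔ m ∈ sgFiltPrev P.deg N := by
  rw [cv_eq_iff, zero_smul, sub_zero]

theorem cv_add {N : ℕ} {m m' : P.M} (hm : m ∈ sgFilt P.deg N) (hm' : m' ∈ sgFilt P.deg N)
    (h : m + m' ∈ sgFilt P.deg N) :
    P.cv N (m + m') h = P.cv N m hm + P.cv N m' hm' := by
  have : (⟨m + m', h⟩ : sgFilt P.deg N) = ⟨m, hm⟩ + ⟨m', hm'⟩ := rfl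
  rw [cv, this, Submodule.Quotient.mk_add, map_add]
  rfl

theorem cv_smulK {N : ℕ} {m : P.M} (hm : m ∈ sgFilt P.deg N) (k : K)
    (h : k • m ∈ sgFilt P.deg N) :
    P.cv N (k • m) h = k * P.cv N m hm := by
  have : (⟨k • m, h⟩ : sgFilt P.deg N) = k • ⟨m, hm⟩ := rfl
  rw [cv, this, Submodule.Quotient.mk_smul, map_smul]
  rfl

end SGPointModule

end PM

section Monomials

variable {K : Type u} {A : Type v} [Field K] [Ring A] [Algebra K A]

theorem skewPBWMonomial_zero {n : ℕ} (x : Fin n → A) : skewPBWMonomial x 0 = 1 := by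
  apply List.prod_eq_one
  intro a ha
  rcases List.mem_ofFn.mp ha with ⟨i, rfl⟩
  simp

theorem skewPBWMonomial_succ {n : ℕ} (x : Fin (n+1) → A) (α : Fin (n+1) → ℕ) :
    skewPBWMonomial x α =
      x 0 ^ α 0 * skewPBWMonomial (fun i => x i.succ) (fun i => α i.succ) := by
  simp [skewPBWMonomial, List.ofFn_succ]

theorem skewPBWMonomial_peel {A : Type*} [Ring A] :
    ∀ {n : ℕ} (x : Fin n → A) (α : Fin n → ℕ), α ≠ 0 →
      ∃ (i : Fin n) (β : Fin n → ℕ), α = β + Pi.single i 1 ∧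
        skewPBWMonomial x α = x i * skewPBWMonomial x β := by
  intro n
  induction n with
  | zero =>
    intro x α hα
    exact absurd (funext fun i => i.elim0) hα
  | succ m ih =>
    intro x α hα
    by_cases h0 : α 0 = 0
    · have htail : (fun i : Fin m => α i.succ) ≠ 0 := by
        intro h
        apply hα
        funext j
        refine Fin.cases ?_ ?_ j
        · exact h0
        · intro i
          exact congrFun h i
      obtain ⟨i', β', hαβ, heq⟩ := ih (fun i => x i.succ) (fun i => α i.succ) htail
      refine ⟨i'.succ, Fin.cons 0 β', ?_, ?_⟩
      · funext j
        refine Fin.cases ?_ ?_ j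
        · simp [h0, Pi.single_eq_of_ne (Fin.succ_ne_zero i').symm]
        · intro i
          have := congrFun hαβ i
          simp only [Pi.add_apply] at this ⊢
          rw [Fin.cons_succ, this]
          congr 1
          by_cases hii : i = i'
          · subst hii; simp
          · rw [Pi.single_eq_of_ne hii, Pi.single_eq_of_ne (by simpa [Fin.succ_inj] using hii)]
      · have hfun : (fun i : Fin m => (Fin.cons (α := fun _ => ℕ) 0 β') i.succ) = β' := by
          funext i
          simp
        rw [skewPBWMonomial_succ, skewPBWMonomial_succ (α := Fin.cons (α := fun _ => ℕ) 0 β'), h0,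
          Fin.cons_zero, hfun, pow_zero, one_mul, one_mul, heq]
    · refine ⟨0, Function.update α 0 (α 0 - 1), ?_, ?_⟩
      · funext j
        by_cases hj : j = 0
        · subst hj
          simp only [Pi.add_apply, Function.update_self, Pi.single_eq_same]
          omega
        · simp [Function.update_of_ne hj, Pi.single_eq_of_ne hj]
      · have hfun : (fun i : Fin m => Function.update α 0 (α 0 - 1) i.succ) =
            fun i => α i.succ := by
          funext i
          rw [Function.update_of_ne (Fin.succ_ne_zero i)]
        have hpow : x 0 ^ α 0 = x 0 * x 0 ^ (α 0 - 1) := by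
          conv_lhs => rw [show α 0 = (α 0 - 1) + 1 by omega]
          rw [pow_succ']
        rw [skewPBWMonomial_succ, skewPBWMonomial_succ (α := Function.update α 0 (α 0 - 1)),
          Function.update_self, hfun, hpow, mul_assoc]

theorem sum_single_one {n : ℕ} (i : Fin n) : (∑ j, Pi.single (M := fun _ => ℕ) i 1 j) = 1 := by
  rw [Finset.sum_pi_single']
  simp

theorem skewPBWMonomial_single {n : ℕ} (x : Fin n → A) (i : Fin n) :
    skewPBWMonomial x (Pi.single i 1) = x i := by
  obtain ⟨i', β, hαβ, heq⟩ := skewPBWMonomial_peel x (Pi.single i 1) (by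
    intro h
    have := congrFun h i
    simp at this)
  have hi' : i' = i := by
    by_contra hne
    have := congrFun hαβ i'
    simp [Pi.single_apply, hne] at this
  subst hi'
  have hβ : β = 0 := by
    funext j
    have := congrFun hαβ j
    simp only [Pi.add_apply] at this
    by_cases hj : j = i'
    · subst hj; simp_all
    · simp [Pi.single_eq_of_ne hj] at this ⊢
      omega
  rw [heq, hβ, skewPBWMonomial_zero, mul_one]

theorem skewPBWMonomial_mem {n : ℕ} (x : Fin n → A) (α : Fin n → ℕ) :
    skewPBWMonomial x α ∈ skewPBWDegK K x (∑ i, α i) :=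
  Submodule.subset_span ⟨α, rfl, rfl⟩

theorem one_mem_skewPBWDegK0 {n : ℕ} (x : Fin n → A) : (1 : A) ∈ skewPBWDegK K x 0 := by
  have := skewPBWMonomial_mem (K := K) x 0
  simpa [skewPBWMonomial_zero] using this

theorem x_mem_skewPBWDegK1 {n : ℕ} (x : Fin n → A) (i : Fin n) :
    x i ∈ skewPBWDegK K x 1 := by
  have := skewPBWMonomial_mem (K := K) x (Pi.single i 1)
  rwa [skewPBWMonomial_single, sum_single_one] at this

theorem skewPBWDegK0_le {n : ℕ} (x : Fin n → A) :
    skewPBWDegK K x 0 ≤ Submodule.span K {(1 : A)} := by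
  apply Submodule.span_le.mpr
  rintro a ⟨α, hα, rfl⟩
  have : α = 0 := by
    funext i
    simp only [Pi.zero_apply]
    have : α i ≤ ∑ j, α j := Finset.single_le_sum (f := α) (fun _ _ => Nat.zero_le _)
      (Finset.mem_univ i)
    omega
  subst this
  rw [skewPBWMonomial_zero]
  exact Submodule.subset_span rfl

theorem xrel_mem_filt1 {n : ℕ} (x : Fin n → A) {r : A}
    (hr : r ∈ Submodule.span K ({(1 : A)} ∪ Set.range x)) :
    r ∈ sgFilt (skewPBWDegK K x) 1 := by
  refine Submodule.span_le.mpr ?_ hr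
  rintro a (rfl | ⟨i, rfl⟩)
  · exact deg_le_sgFilt _ (Nat.zero_le 1) (one_mem_skewPBWDegK0 x)
  · exact deg_le_sgFilt _ le_rfl (x_mem_skewPBWDegK1 x i)

theorem x_mem_filt1 {n : ℕ} (x : Fin n → A) (i : Fin n) :
    x i ∈ sgFilt (skewPBWDegK K x) 1 :=
  deg_le_sgFilt _ le_rfl (x_mem_skewPBWDegK1 x i)

end Monomials

section PtSeq

variable {K : Type u} {B : Type v} [Field K] [Ring B] [Algebra K B]
variable {Bdeg : ℕ → Submodule K B} (P : SGPointModule Bdeg)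

theorem SGPointModule.cv_congr_sub {N : ℕ} {m m' : P.M} (hm : m ∈ sgFilt P.deg N)
    (hm' : m' ∈ sgFilt P.deg N) (h : m - m' ∈ sgFiltPrev P.deg N) :
    P.cv N m hm = P.cv N m' hm' := by
  rw [SGPointModule.cv_eq_iff]
  have h2 := P.cv_spec hm'
  have hd : m - P.cv N m' hm' • P.e N = (m - m') + (m' - P.cv N m' hm' • P.e N) := by abel
  rw [hd]
  exact add_mem h h2

end PtSeq

section Skew

variable {K : Type u} {A : Type v} [Field K] [Ring A] [Algebra K A] {n : ℕ}
variable (x : Fin n → A) (P : SGPointModule (skewPBWDegK K x))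

theorem xsmul_memF (i : Fin n) {N : ℕ} {m : P.M} (hm : m ∈ sgFilt P.deg N) :
    x i • m ∈ sgFilt P.deg (N + 1) := by
  have := P.smul_mem_sgFilt (x_mem_filt1 x i) N hm
  rwa [Nat.add_comm] at this

/-- The `k`-th point of the point sequence associated to the point module `P`. -/
noncomputable def pbwPt (k : ℕ) (i : Fin n) : K :=
  P.cv (k+1) (x i • P.e k) (xsmul_memF x P i (P.e_memF k))

theorem pbwPt_spec (k : ℕ) (i : Fin n) :
    x i • P.e k - pbwPt x P k i • P.e (k+1) ∈ sgFiltPrev P.deg (k+1) :=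
  P.cv_spec (xsmul_memF x P i (P.e_memF k))

theorem cv_x_smul (i : Fin n) {N : ℕ} {m : P.M} (hm : m ∈ sgFilt P.deg N)
    (h2 : x i • m ∈ sgFilt P.deg (N+1)) :
    P.cv (N+1) (x i • m) h2 = pbwPt x P N i * P.cv N m hm := by
  set t := P.cv N m hm with ht
  have hsub := P.cv_spec hm
  have h3 : x i • m - t • (x i • P.e N) ∈ sgFiltPrev P.deg (N+1) := by
    have := P.smul_mem_sgFiltPrev (x_mem_filt1 x i) N hsub
    rw [Nat.add_comm] at this
    rwa [smul_sub, P.ksmul_comm] at this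
  rw [SGPointModule.cv_eq_iff]
  have hp := pbwPt_spec x P N i
  have hdecomp : x i • m - (pbwPt x P N i * t) • P.e (N+1)
      = (x i • m - t • (x i • P.e N)) + t • (x i • P.e N - pbwPt x P N i • P.e (N+1)) := by
    rw [smul_sub, smul_smul, mul_comm t]
    abel
  rw [hdecomp]
  exact add_mem h3 (Submodule.smul_mem _ _ hp)

theorem cv_smul_gen {p : ℕ} {b : A} (hb : b ∈ sgFilt (skewPBWDegK K x) p) {q : ℕ} {m : P.M}
    (hm : m ∈ sgFilt P.deg q) (h1 : b • m ∈ sgFilt P.deg (p+q))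
    (h2 : b • P.e q ∈ sgFilt P.deg (p+q)) :
    P.cv (p+q) (b • m) h1 = P.cv q m hm * P.cv (p+q) (b • P.e q) h2 := by
  set t := P.cv q m hm with ht
  have hsub := P.cv_spec hm
  have h3 : b • m - t • (b • P.e q) ∈ sgFiltPrev P.deg (p+q) := by
    have := P.smul_mem_sgFiltPrev hb q hsub
    rwa [smul_sub, P.ksmul_comm] at this
  have hmem : t • (b • P.e q) ∈ sgFilt P.deg (p+q) := Submodule.smul_mem _ _ h2
  calc P.cv (p+q) (b • m) h1 = P.cv (p+q) (t • (b • P.e q)) hmem :=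
        P.cv_congr_sub _ _ h3
    _ = t * P.cv (p+q) (b • P.e q) h2 := P.cv_smulK _ _ _

theorem smul_stable (hspan : Submodule.span K (Set.range (skewPBWMonomial x)) = ⊤)
    (N : Submodule K P.M) (hx : ∀ i : Fin n, ∀ m ∈ N, x i • m ∈ N) (b : A) {m : P.M}
    (hm : m ∈ N) : b • m ∈ N := by
  have hb : b ∈ Submodule.span K (Set.range (skewPBWMonomial x)) := by
    rw [hspan]; trivial
  induction hb using Submodule.span_induction with
  | mem a ha =>
    obtain ⟨α, rfl⟩ := ha
    have hpow : ∀ (i : Fin n) (e : ℕ), ∀ m' ∈ N, (x i ^ e) • m' ∈ N := by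
      intro i e
      induction e with
      | zero => intro m' hm'; simpa using hm'
      | succ e ih =>
        intro m' hm'
        rw [pow_succ, mul_smul]
        exact ih _ (hx i m' hm')
    have hlist : ∀ l : List A, (∀ a ∈ l, ∀ m' ∈ N, a • m' ∈ N) →
        ∀ m' ∈ N, l.prod • m' ∈ N := by
      intro l
      induction l with
      | nil => intro _ m' hm'; simpa using hm'
      | cons a l ih =>
        intro h m' hm'
        rw [List.prod_cons, mul_smul]
        exact h a (by simp) _ (ih (fun a ha => h a (by simp [ha])) m' hm')
    apply hlist _ ?_ _ hm
    intro a ha m' hm'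
    rcases List.mem_ofFn.mp ha with ⟨i, rfl⟩
    exact hpow i (α i) m' hm'
  | zero => simpa using N.zero_mem
  | add a b _ _ iha ihb => rw [add_smul]; exact N.add_mem iha ihb
  | smul k a _ iha => rw [smul_assoc]; exact N.smul_mem k iha

theorem span_e0_top (hspan : Submodule.span K (Set.range (skewPBWMonomial x)) = ⊤) :
    Submodule.span A {P.e 0} = ⊤ := by
  obtain ⟨v, hv0, hvspan⟩ := P.cyclic
  obtain ⟨cV, rfl⟩ := P.deg_smul_e hv0
  rw [eq_top_iff, ← hvspan]
  apply Submodule.span_le.mpr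
  rintro a rfl
  exact Submodule.mem_span_singleton.mpr ⟨algebraMap K A cV, by rw [algebraMap_smul]⟩

theorem pbwPt_ne (hspan : Submodule.span K (Set.range (skewPBWMonomial x)) = ⊤) (k : ℕ) :
    ∃ i, pbwPt x P k i ≠ 0 := by
  by_contra h
  push_neg at h
  have hstep : ∀ i, x i • P.e k ∈ sgFilt P.deg k := fun i => (P.cv_eq_zero_iff _).mp (h i)
  have claimA : ∀ (i : Fin n), ∀ j ≤ k, ∀ m ∈ P.deg j, x i • m ∈ sgFilt P.deg k := by
    intro i j hj m hm
    obtain ⟨cm, rfl⟩ := P.deg_smul_e hm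
    rw [P.ksmul_comm]
    apply Submodule.smul_mem
    rcases eq_or_lt_of_le hj with rfl | hlt
    · exact hstep i
    · exact sgFilt_mono P.deg (by omega) (xsmul_memF x P i (P.e_memF j))
  have claimB : ∀ (i : Fin n), ∀ j, j ≤ k → ∀ m ∈ sgFilt P.deg j, x i • m ∈ sgFilt P.deg k := by
    intro i j
    induction j with
    | zero =>
      intro _ m hm
      rw [sgFilt_zero] at hm
      exact claimA i 0 (Nat.zero_le k) m hm
    | succ j ih =>
      intro hj m hm
      rw [sgFilt_succ] at hm
      rcases Submodule.mem_sup.mp hm with ⟨f, hf, d, hd, rfl⟩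
      rw [smul_add]
      exact add_mem (ih (by omega) f hf) (claimA i (j+1) hj d hd)
  have htop : ∀ m : P.M, m ∈ sgFilt P.deg k := by
    intro m
    have hm : m ∈ Submodule.span A {P.e 0} := by rw [span_e0_top x P hspan]; trivial
    obtain ⟨b, rfl⟩ := Submodule.mem_span_singleton.mp hm
    exact smul_stable x P hspan _ (fun i m hm => claimB i k le_rfl m hm) b
      (deg_le_sgFilt P.deg (Nat.zero_le k) (P.e_mem 0))
  exact P.e_not_prev (k+1) (htop (P.e (k+1)))

variable (c : Fin n → Fin n → K)

theorem pbwPt_rel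
    (hrel : ∀ i j : Fin n, i < j →
      x j * x i - c i j • (x i * x j) ∈ Submodule.span K ({(1 : A)} ∪ Set.range x))
    (k : ℕ) (i j : Fin n) (hij : i < j) :
    pbwPt x P (k+1) j * pbwPt x P k i = c i j * (pbwPt x P (k+1) i * pbwPt x P k j) := by
  have m1 : x i • P.e k ∈ sgFilt P.deg (k+1) := xsmul_memF x P i (P.e_memF k)
  have m1' : x j • P.e k ∈ sgFilt P.deg (k+1) := xsmul_memF x P j (P.e_memF k)
  have m2 : x j • (x i • P.e k) ∈ sgFilt P.deg (k+2) := xsmul_memF x P j m1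
  have m2' : x i • (x j • P.e k) ∈ sgFilt P.deg (k+2) := xsmul_memF x P i m1'
  have T1 : P.cv (k+2) (x j • (x i • P.e k)) m2 = pbwPt x P (k+1) j * pbwPt x P k i := by
    rw [cv_x_smul x P j m1 m2]
    rfl
  have T2 : P.cv (k+2) (x i • (x j • P.e k)) m2' = pbwPt x P (k+1) i * pbwPt x P k j := by
    rw [cv_x_smul x P i m1' m2']
    rfl
  have hrmem : x j • (x i • P.e k) - c i j • (x i • (x j • P.e k))
      ∈ sgFiltPrev P.deg (k+2) := by
    have hr1 : (x j * x i - c i j • (x i * x j)) ∈ sgFilt (skewPBWDegK K x) 1 :=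
      xrel_mem_filt1 x (hrel i j hij)
    have hmem := P.smul_mem_sgFilt hr1 k (P.e_memF k)
    rw [Nat.add_comm] at hmem
    have hexp : (x j * x i - c i j • (x i * x j)) • P.e k
        = x j • (x i • P.e k) - c i j • (x i • (x j • P.e k)) := by
      rw [sub_smul, mul_smul, smul_assoc, mul_smul]
    rwa [hexp] at hmem
  have hmemc : c i j • (x i • (x j • P.e k)) ∈ sgFilt P.deg (k+2) :=
    Submodule.smul_mem _ _ m2'
  have := P.cv_congr_sub m2 hmemc hrmem
  rw [T1, P.cv_smulK m2'] at this
  rw [this, T2]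

end Skew

section Step

variable {K : Type u} [Field K] {n : ℕ}

/-- Pure linear-algebra step: the next point of the point sequence is projectively
determined by the previous one, via the skew commutation relations. -/
theorem pt_step (c : Fin n → Fin n → K) (hc : ∀ i j : Fin n, i < j → c i j ≠ 0)
    (w v w' v' : Fin n → K)
    (hw : ∃ i, w i ≠ 0) (hv : ∃ i, v i ≠ 0) (hv' : ∃ i, v' i ≠ 0)
    (hrelv : ∀ i j : Fin n, i < j → v j * w i = c i j * (v i * w j))
    (hrelv' : ∀ i j : Fin n, i < j → v' j * w' i = c i j * (v' i * w' j))
    (μw : K) (hμw : μw ≠ 0) (hww : ∀ i, w' i = μw * w i) :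
    ∃ μ : K, μ ≠ 0 ∧ ∀ i, v' i = μ * v i := by
  obtain ⟨i0, hw0⟩ := hw
  have hw0' : w' i0 ≠ 0 := by rw [hww i0]; exact mul_ne_zero hμw hw0
  -- a general fact : if u satisfies the relations with w and u i0 = 0 then u = 0
  have key : ∀ (W U : Fin n → K), W i0 ≠ 0 →
      (∀ i j : Fin n, i < j → U j * W i = c i j * (U i * W j)) →
      U i0 = 0 → ∀ j, U j = 0 := by
    intro W U hW hrelU hU0 j
    rcases lt_trichotomy j i0 with h | h | h
    · have := hrelU j i0 h
      rw [hU0] at this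
      simp only [zero_mul] at this
      rcases mul_eq_zero.mp this.symm with h1 | h1
      · exact absurd h1 (hc j i0 h)
      · rcases mul_eq_zero.mp h1 with h2 | h2
        · exact h2
        · exact absurd h2 hW
    · rw [h, hU0]
    · have := hrelU i0 j h
      rw [hU0] at this
      simp only [zero_mul, mul_zero] at this
      rcases mul_eq_zero.mp this with h1 | h1
      · exact h1
      · exact absurd h1 hW
  have hv0 : v i0 ≠ 0 := by
    intro h0
    obtain ⟨i, hi⟩ := hv
    exact hi (key w v hw0 hrelv h0 i)
  have hv0' : v' i0 ≠ 0 := by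
    intro h0
    obtain ⟨i, hi⟩ := hv'
    exact hi (key w' v' hw0' hrelv' h0 i)
  refine ⟨v' i0 / v i0, div_ne_zero hv0' hv0, ?_⟩
  set μ := v' i0 / v i0 with hμdefn
  have hμdef : v' i0 = μ * v i0 := by
    rw [hμdefn, div_mul_cancel₀ _ hv0]
  intro j
  rcases lt_trichotomy j i0 with h | h | h
  · -- j < i0 : use relations (j, i0)
    have e1 := hrelv j i0 h
    have e2 : v' i0 * w j = c j i0 * (v' j * w i0) := by
      have h2 := hrelv' j i0 h
      rw [hww j, hww i0] at h2
      apply mul_left_cancel₀ hμw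
      linear_combination h2
    have keyj : (c j i0 * w i0) * v' j = (c j i0 * w i0) * (μ * v j) := by
      calc (c j i0 * w i0) * v' j = c j i0 * (v' j * w i0) := by ring
        _ = v' i0 * w j := e2.symm
        _ = (μ * v i0) * w j := by rw [hμdef]
        _ = μ * (v i0 * w j) := by ring
        _ = μ * (c j i0 * (v j * w i0)) := by rw [e1]
        _ = (c j i0 * w i0) * (μ * v j) := by ring
    exact mul_left_cancel₀ (mul_ne_zero (hc j i0 h) hw0) keyj
  · rw [h, hμdef]
  · -- i0 < j : use relations (i0, j)
    have e1 := hrelv i0 j h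
    have e2 : v' j * w i0 = c i0 j * (v' i0 * w j) := by
      have h2 := hrelv' i0 j h
      rw [hww j, hww i0] at h2
      apply mul_left_cancel₀ hμw
      linear_combination h2
    have keyj : v' j * w i0 = (μ * v j) * w i0 := by
      calc v' j * w i0 = c i0 j * (v' i0 * w j) := e2
        _ = c i0 j * ((μ * v i0) * w j) := by rw [hμdef]
        _ = μ * (c i0 j * (v i0 * w j)) := by ring
        _ = μ * (v j * w i0) := by rw [← e1]
        _ = (μ * v j) * w i0 := by ring
    exact mul_right_cancel₀ hw0 keyj

end Step

section PM2

variable {K : Type u} {B : Type v} [Field K] [Ring B] [Algebra K B]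
variable {Bdeg : ℕ → Submodule K B} (P : SGPointModule Bdeg)

namespace SGPointModule

theorem cv_congr {N N' : ℕ} (hNN : N = N') {m m' : P.M} (hm : m = m')
    (h1 : m ∈ sgFilt P.deg N) (h2 : m' ∈ sgFilt P.deg N') :
    P.cv N m h1 = P.cv N' m' h2 := by
  subst hNN; subst hm; rfl

theorem mk_eq_cv_smul {N : ℕ} {m : P.M} (hm : m ∈ sgFilt P.deg N) :
    (Submodule.Quotient.mk ⟨m, hm⟩ : P.GrQuot N) = P.cv N m hm • P.mkE N := by
  rw [← (P.uIso N).apply_symm_apply (Submodule.Quotient.mk ⟨m, hm⟩)]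
  rfl

theorem mkE_smul_cancel {N : ℕ} {s s' : K} (h : s • P.mkE N = s' • P.mkE N) : s = s' := by
  by_contra hne
  have : (s - s') • P.mkE N = 0 := by rw [sub_smul, h, sub_self]
  rcases smul_eq_zero.mp this with h1 | h1
  · exact hne (sub_eq_zero.mp h1)
  · exact P.mkE_ne N h1

theorem cv_zero {N : ℕ} (h : (0 : P.M) ∈ sgFilt P.deg N) : P.cv N 0 h = 0 :=
  P.cv_of_mem_prev h (Submodule.zero_mem _)

end SGPointModule

end PM2

section Main

variable {K : Type u} {A : Type v} [Field K] [Ring A] [Algebra K A] {n : ℕ}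
variable (x : Fin n → A)

theorem bsmul_e_memF (P : SGPointModule (skewPBWDegK K x)) {p : ℕ} {b : A}
    (hb : b ∈ sgFilt (skewPBWDegK K x) p) (q : ℕ) {N : ℕ} (hN : N = p + q) :
    b • P.e q ∈ sgFilt P.deg N := by
  subst hN
  exact P.smul_mem_sgFilt hb q (P.e_memF q)

/-- Key lemma: the coefficient functionals of two point modules with proportional
point sequences are proportional, with ratio given by the products of the
proportionality factors. -/
theorem star_lemma
    (P P' : SGPointModule (skewPBWDegK K x)) (μ : ℕ → K)
    (hμ : ∀ k i, pbwPt x P' k i = μ k * pbwPt x P k i) :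
    ∀ (p q N : ℕ), N = p + q → ∀ (b : A), b ∈ sgFilt (skewPBWDegK K x) p →
      ∀ (h1 : b • P.e q ∈ sgFilt P.deg N) (h2 : b • P'.e q ∈ sgFilt P'.deg N),
      (∏ t ∈ Finset.range q, μ t) * P'.cv N (b • P'.e q) h2 =
        (∏ t ∈ Finset.range N, μ t) * P.cv N (b • P.e q) h1 := by
  intro p
  induction p with
  | zero =>
    intro q N hN b hb h1 h2
    have hq : N = q := by omega
    subst hq
    rw [sgFilt_zero] at hb
    obtain ⟨k, rfl⟩ := Submodule.mem_span_singleton.mp (skewPBWDegK0_le x hb)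
    have e1 : P.cv N ((k • (1:A)) • P.e N) h1 = k := by
      have hmem : k • P.e N ∈ sgFilt P.deg N := Submodule.smul_mem _ _ (P.e_memF N)
      rw [P.cv_congr rfl (by rw [smul_assoc, one_smul]) h1 hmem,
        P.cv_smulK (P.e_memF N), P.cv_e, mul_one]
    have e2 : P'.cv N ((k • (1:A)) • P'.e N) h2 = k := by
      have hmem : k • P'.e N ∈ sgFilt P'.deg N := Submodule.smul_mem _ _ (P'.e_memF N)
      rw [P'.cv_congr rfl (by rw [smul_assoc, one_smul]) h2 hmem,
        P'.cv_smulK (P'.e_memF N), P'.cv_e, mul_one]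
    rw [e1, e2]
  | succ p ih =>
    intro q N hN b hb h1 h2
    have hN1 : N = (p + q) + 1 := by omega
    rw [sgFilt_succ] at hb
    rcases Submodule.mem_sup.mp hb with ⟨f, hf, d, hd, rfl⟩
    have hdP : ∀ (Q : SGPointModule (skewPBWDegK K x)), d • Q.e q ∈ sgFilt Q.deg N :=
      fun Q => bsmul_e_memF x Q (deg_le_sgFilt _ (le_refl (p+1)) hd) q hN
    have hfprev : ∀ (Q : SGPointModule (skewPBWDegK K x)),
        f • Q.e q ∈ sgFiltPrev Q.deg N := by
      intro Q
      rw [hN1]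
      exact bsmul_e_memF x Q hf q rfl
    have hadd : ∀ (Q : SGPointModule (skewPBWDegK K x))
        (h : (f + d) • Q.e q ∈ sgFilt Q.deg N),
        Q.cv N ((f + d) • Q.e q) h = Q.cv N (d • Q.e q) (hdP Q) := by
      intro Q h
      apply Q.cv_congr_sub
      have heq : (f + d) • Q.e q - d • Q.e q = f • Q.e q := by
        rw [add_smul]; abel
      rw [heq]
      exact hfprev Q
    rw [hadd P h1, hadd P' h2]
    clear hadd hfprev hb h1 h2 hf f
    induction hd using Submodule.span_induction with
    | mem a ha =>
      obtain ⟨α, hα, rfl⟩ := ha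
      have hα0 : α ≠ 0 := by
        intro h
        rw [h] at hα
        simp at hα
      obtain ⟨i, β, hαβ, heq⟩ := skewPBWMonomial_peel x α hα0
      have hβ : (∑ t, β t) = p := by
        rw [hαβ] at hα
        simp only [Pi.add_apply] at hα
        rw [Finset.sum_add_distrib, sum_single_one] at hα
        omega
      have hb' : skewPBWMonomial x β ∈ sgFilt (skewPBWDegK K x) p := by
        apply deg_le_sgFilt _ le_rfl
        rw [← hβ]
        exact skewPBWMonomial_mem x β
      have hm1 : ∀ (Q : SGPointModule (skewPBWDegK K x)),
          skewPBWMonomial x β • Q.e q ∈ sgFilt Q.deg (p + q) :=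
        fun Q => bsmul_e_memF x Q hb' q rfl
      have ihins := ih q (p+q) rfl (skewPBWMonomial x β) hb' (hm1 P) (hm1 P')
      have hx1 : ∀ (Q : SGPointModule (skewPBWDegK K x)),
          x i • (skewPBWMonomial x β • Q.e q) ∈ sgFilt Q.deg ((p+q)+1) :=
        fun Q => xsmul_memF x Q i (hm1 Q)
      have hmeq : ∀ (Q : SGPointModule (skewPBWDegK K x)),
          skewPBWMonomial x α • Q.e q = x i • (skewPBWMonomial x β • Q.e q) := by
        intro Q
        rw [heq, mul_smul]
      have hc1 : P.cv N (skewPBWMonomial x α • P.e q) (hdP P) =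
          pbwPt x P (p+q) i * P.cv (p+q) (skewPBWMonomial x β • P.e q) (hm1 P) := by
        rw [P.cv_congr hN1 (hmeq P) (hdP P) (hx1 P), cv_x_smul x P i (hm1 P) (hx1 P)]
      have hc2 : P'.cv N (skewPBWMonomial x α • P'.e q) (hdP P') =
          pbwPt x P' (p+q) i * P'.cv (p+q) (skewPBWMonomial x β • P'.e q) (hm1 P') := by
        rw [P'.cv_congr hN1 (hmeq P') (hdP P') (hx1 P'), cv_x_smul x P' i (hm1 P') (hx1 P')]
      rw [hc1, hc2, hμ (p+q) i]
      have hprod : (∏ t ∈ Finset.range N, μ t) =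
          (∏ t ∈ Finset.range (p+q), μ t) * μ (p+q) := by
        rw [hN1, Finset.prod_range_succ]
      rw [hprod]
      calc (∏ t ∈ Finset.range q, μ t) *
            (μ (p+q) * pbwPt x P (p+q) i *
              P'.cv (p+q) (skewPBWMonomial x β • P'.e q) (hm1 P'))
          = μ (p+q) * pbwPt x P (p+q) i *
            ((∏ t ∈ Finset.range q, μ t) *
              P'.cv (p+q) (skewPBWMonomial x β • P'.e q) (hm1 P')) := by ring
        _ = μ (p+q) * pbwPt x P (p+q) i *
            ((∏ t ∈ Finset.range (p+q), μ t) *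
              P.cv (p+q) (skewPBWMonomial x β • P.e q) (hm1 P)) := by rw [ihins]
        _ = (∏ t ∈ Finset.range (p+q), μ t) * μ (p+q) *
            (pbwPt x P (p+q) i * P.cv (p+q) (skewPBWMonomial x β • P.e q) (hm1 P)) := by
            ring
    | zero =>
      have hz : ∀ (Q : SGPointModule (skewPBWDegK K x))
          (h : (0:A) • Q.e q ∈ sgFilt Q.deg N), Q.cv N ((0:A) • Q.e q) h = 0 := by
        intro Q h
        have h0 : (0:A) • Q.e q ∈ sgFilt Q.deg N := h
        rw [Q.cv_congr rfl (zero_smul A (Q.e q)) h (by rw [← zero_smul A (Q.e q)]; exact h)]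
        exact Q.cv_zero _
      rw [hz P (hdP P), hz P' (hdP P')]
      ring
    | add a b ha hb iha ihb =>
      have hmem : ∀ (Q : SGPointModule (skewPBWDegK K x)) (e : A),
          e ∈ skewPBWDegK K x (p+1) → e • Q.e q ∈ sgFilt Q.deg N :=
        fun Q e he => bsmul_e_memF x Q (deg_le_sgFilt _ (le_refl (p+1)) he) q hN
      have hsplit : ∀ (Q : SGPointModule (skewPBWDegK K x))
          (h : (a + b) • Q.e q ∈ sgFilt Q.deg N)
          (h1 : a • Q.e q ∈ sgFilt Q.deg N) (h2 : b • Q.e q ∈ sgFilt Q.deg N),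
          Q.cv N ((a + b) • Q.e q) h = Q.cv N (a • Q.e q) h1 + Q.cv N (b • Q.e q) h2 := by
        intro Q h h1 h2
        rw [← Q.cv_add h1 h2 (by rw [← add_smul]; exact h)]
        exact Q.cv_congr rfl (add_smul a b (Q.e q)) h _
      rw [hsplit P (hdP P) (hmem P a ha) (hmem P b hb),
        hsplit P' (hdP P') (hmem P' a ha) (hmem P' b hb), mul_add, mul_add,
        iha (fun Q => hmem Q a ha), ihb (fun Q => hmem Q b hb)]
    | smul k a ha iha =>
      have hmem : ∀ (Q : SGPointModule (skewPBWDegK K x)),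
          a • Q.e q ∈ sgFilt Q.deg N :=
        fun Q => bsmul_e_memF x Q (deg_le_sgFilt _ (le_refl (p+1)) ha) q hN
      have hsc : ∀ (Q : SGPointModule (skewPBWDegK K x))
          (h : (k • a) • Q.e q ∈ sgFilt Q.deg N),
          Q.cv N ((k • a) • Q.e q) h = k * Q.cv N (a • Q.e q) (hmem Q) := by
        intro Q h
        rw [Q.cv_congr rfl (smul_assoc k a (Q.e q)) h
          (by rw [← smul_assoc]; exact h), Q.cv_smulK (hmem Q)]
      rw [hsc P (hdP P), hsc P' (hdP P')]
      calc (∏ t ∈ Finset.range q, μ t) * (k * P'.cv N (a • P'.e q) (hmem P'))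
          = k * ((∏ t ∈ Finset.range q, μ t) * P'.cv N (a • P'.e q) (hmem P')) := by ring
        _ = k * ((∏ t ∈ Finset.range N, μ t) * P.cv N (a • P.e q) (hmem P)) := by
            rw [iha (fun Q => hmem Q)]
        _ = (∏ t ∈ Finset.range N, μ t) * (k * P.cv N (a • P.e q) (hmem P)) := by ring

end Main

section Main2

variable {K : Type u} {A : Type v} [Field K] [Ring A] [Algebra K A] {n : ℕ}
variable (x : Fin n → A)

/-- Construction of a graded isomorphism from proportional point sequences. -/
theorem grIso_of_mu (P P' : SGPointModule (skewPBWDegK K x)) (μ : ℕ → K)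
    (hμ0 : ∀ k, μ k ≠ 0)
    (hμ : ∀ k i, pbwPt x P' k i = μ k * pbwPt x P k i) :
    SGPointModule.GrIso P P' := by
  set Λ : ℕ → K := fun k => ∏ t ∈ Finset.range k, μ t with hΛ
  have hΛne : ∀ k, Λ k ≠ 0 := fun k => Finset.prod_ne_zero_iff.mpr (fun t _ => hμ0 t)
  refine ⟨fun N => (P.uIso N).symm.trans
    ((LinearEquiv.smulOfNeZero K K (Λ N) (hΛne N)).trans (P'.uIso N)), ?_⟩
  intro p N b hb m hm m' hm' hpre h1 h2
  have gapply : ∀ (N : ℕ) (mm : P.M) (hmm : mm ∈ sgFilt P.deg N),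
      ((P.uIso N).symm.trans
        ((LinearEquiv.smulOfNeZero K K (Λ N) (hΛne N)).trans (P'.uIso N)))
        (Submodule.Quotient.mk ⟨mm, hmm⟩) = (Λ N * P.cv N mm hmm) • P'.mkE N := by
    intro N mm hmm
    rfl
  rw [gapply N m hm, P'.mk_eq_cv_smul hm'] at hpre
  have hpre' : P'.cv N m' hm' = Λ N * P.cv N m hm := (P'.mkE_smul_cancel hpre).symm
  have hbe : b • P.e N ∈ sgFilt P.deg (p + N) := bsmul_e_memF x P hb N rfl
  have hbe' : b • P'.e N ∈ sgFilt P'.deg (p + N) := bsmul_e_memF x P' hb N rfl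
  have hstar := star_lemma x P P' μ hμ p N (p + N) rfl b hb hbe hbe'
  have hsplit := cv_smul_gen x P hb hm h1 hbe
  have hsplit' := cv_smul_gen x P' hb hm' h2 hbe'
  rw [gapply (p + N) (b • m) h1, P'.mk_eq_cv_smul h2]
  congr 1
  rw [hsplit, hsplit', hpre']
  calc Λ (p + N) * (P.cv N m hm * P.cv (p+N) (b • P.e N) hbe)
      = P.cv N m hm * (Λ (p+N) * P.cv (p+N) (b • P.e N) hbe) := by ring
    _ = P.cv N m hm * (Λ N * P'.cv (p+N) (b • P'.e N) hbe') := by rw [hstar]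
    _ = Λ N * P.cv N m hm * P'.cv (p+N) (b • P'.e N) hbe' := by ring

/-- From a graded isomorphism, the first two points of the point sequences agree
projectively. -/
theorem ptPair_of_grIso (P P' : SGPointModule (skewPBWDegK K x))
    (hiso : SGPointModule.GrIso P P') :
    ∃ a1 a0 : K, a1 ≠ 0 ∧ a0 ≠ 0 ∧
      (∀ i, pbwPt x P' 1 i = a1 * pbwPt x P 1 i) ∧
      (∀ i, pbwPt x P' 0 i = a0 * pbwPt x P 0 i) := by
  obtain ⟨g, hg⟩ := hiso
  have hc : ∀ N : ℕ, ∃ cN : K, cN ≠ 0 ∧ g N (P.mkE N) = cN • P'.mkE N := by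
    intro N
    refine ⟨(P'.uIso N).symm (g N (P.mkE N)), ?_, ?_⟩
    · intro h0
      have : g N (P.mkE N) = 0 := by
        have := (P'.uIso N).apply_symm_apply (g N (P.mkE N))
        rw [h0] at this
        rw [← this]
        simp
      exact P.mkE_ne N ((g N).map_eq_zero_iff.mp this)
    · exact ((P'.uIso N).apply_symm_apply (g N (P.mkE N))).symm
  obtain ⟨c0, hc0, hgc0⟩ := hc 0
  obtain ⟨c1, hc1, hgc1⟩ := hc 1
  obtain ⟨c2, hc2, hgc2⟩ := hc 2
  -- generic level computation
  have key : ∀ (N : ℕ) (cN cN1 : K), g N (P.mkE N) = cN • P'.mkE N →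
      g (1+N) (P.mkE (1+N)) = cN1 • P'.mkE (1+N) →
      ∀ i, pbwPt x P N i * cN1 = cN * pbwPt x P' N i := by
    intro N cN cN1 hgN hgN1 i
    have hx0 : x i • P.e N ∈ sgFilt P.deg (1 + N) :=
      bsmul_e_memF x P (x_mem_filt1 x i) N rfl
    have hx0' : x i • (cN • P'.e N) ∈ sgFilt P'.deg (1 + N) := by
      have : x i • P'.e N ∈ sgFilt P'.deg (1 + N) :=
        bsmul_e_memF x P' (x_mem_filt1 x i) N rfl
      rw [P'.ksmul_comm]
      exact Submodule.smul_mem _ _ this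
    have hmem' : cN • P'.e N ∈ sgFilt P'.deg N :=
      Submodule.smul_mem _ _ (P'.e_memF N)
    have hpre : g N (Submodule.Quotient.mk ⟨P.e N, P.e_memF N⟩) =
        Submodule.Quotient.mk ⟨cN • P'.e N, hmem'⟩ := by
      have : (⟨cN • P'.e N, hmem'⟩ : sgFilt P'.deg N) = cN • ⟨P'.e N, P'.e_memF N⟩ := rfl
      rw [this, Submodule.Quotient.mk_smul]
      exact hgN
    have hconc := hg 1 N (x i) (x_mem_filt1 x i) (P.e N) (P.e_memF N)
      (cN • P'.e N) hmem' hpre hx0 hx0'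
    -- rewrite LHS
    have hLHS : (Submodule.Quotient.mk ⟨x i • P.e N, hx0⟩ : P.GrQuot (1 + N)) =
        pbwPt x P N i • P.mkE (1 + N) := by
      have h1 : x i • P.e N ∈ sgFilt P.deg (N + 1) := xsmul_memF x P i (P.e_memF N)
      have := P.mk_eq_cv_smul hx0
      rw [this]
      congr 1
      exact P.cv_congr (by omega) rfl hx0 h1
    have hRHS : (Submodule.Quotient.mk ⟨x i • (cN • P'.e N), hx0'⟩ :
        P'.GrQuot (1 + N)) = (cN * pbwPt x P' N i) • P'.mkE (1 + N) := by
      have h1 : x i • P'.e N ∈ sgFilt P'.deg (1 + N) :=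
        bsmul_e_memF x P' (x_mem_filt1 x i) N rfl
      have heq : (⟨x i • (cN • P'.e N), hx0'⟩ : sgFilt P'.deg (1 + N)) =
          cN • ⟨x i • P'.e N, h1⟩ := Subtype.ext (P'.ksmul_comm _ _ _)
      rw [heq, Submodule.Quotient.mk_smul, P'.mk_eq_cv_smul h1, smul_smul]
      congr 2
      have h2 : x i • P'.e N ∈ sgFilt P'.deg (N + 1) := xsmul_memF x P' i (P'.e_memF N)
      exact P'.cv_congr (by omega) rfl h1 h2
    rw [hLHS, map_smul, hgN1, hRHS, smul_smul] at hconc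
    exact P'.mkE_smul_cancel hconc
  have k0 := key 0 c0 c1 hgc0 hgc1
  have k1 := key 1 c1 c2 hgc1 hgc2
  refine ⟨c2 / c1, c1 / c0, div_ne_zero hc2 hc1, div_ne_zero hc1 hc0, ?_, ?_⟩
  · intro i
    have := k1 i
    rw [div_mul_eq_mul_div, eq_div_iff hc1]
    linear_combination -this
  · intro i
    have := k0 i
    rw [div_mul_eq_mul_div, eq_div_iff hc0]
    linear_combination -this

end Main2


/-- let `A` be a skew PBW extension of a field `K` (with `A` a
`K`-algebra) with constants `c_{ij}` (`i < j`), regarded as a finitely semi-graded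
`K`-algebra. Then there is an injective function from `P(A)/∼` (point modules modulo
`Gr(M) ≅ Gr(M')`) into
`X₂ = {([v],[w]) ∈ ℙ^{n−1}(K) × ℙ^{n−1}(K) : vⱼwᵢ = c_{ij} vᵢwⱼ for all i < j}`;
in particular `m₀ = 2` works. -/
theorem skewPBW_pointModules_inject_into_X2 {K : Type u} {A : Type v} [Field K]
    [Ring A] [Algebra K A] {n : ℕ} (x : Fin n → A)
    -- A is a skew PBW extension of K
    (hli : LinearIndependent K (skewPBWMonomial x))
    (hspan : Submodule.span K (Set.range (skewPBWMonomial x)) = ⊤)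
    (c : Fin n → Fin n → K) (hc : ∀ i j : Fin n, i < j → c i j ≠ 0)
    (hrel : ∀ i j : Fin n, i < j →
      x j * x i - c i j • (x i * x j) ∈ Submodule.span K ({(1 : A)} ∪ Set.range x)) :
    ∃ f : Quot (SGPointModule.GrIso (Bdeg := skewPBWDegK K x)) →
        {pq : Projectivization K (Fin n → K) × Projectivization K (Fin n → K) //
          pq ∈ {pq : Projectivization K (Fin n → K) × Projectivization K (Fin n → K) |
            ∃ (v : Fin n → K) (hv : v ≠ 0) (w : Fin n → K) (hw : w ≠ 0),
              pq = (Projectivization.mk K v hv, Projectivization.mk K w hw) ∧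
              ∀ i j : Fin n, i < j → v j * w i = c i j * (v i * w j)}},
      Function.Injective f := by
  classical
  have h0ne : ∀ (P : SGPointModule (skewPBWDegK K x)) (k : ℕ), pbwPt x P k ≠ 0 := by
    intro P k h
    obtain ⟨i, hi⟩ := pbwPt_ne x P hspan k
    exact hi (congrFun h i)
  refine ⟨Quot.lift (fun P =>
    ⟨(Projectivization.mk K (pbwPt x P 1) (h0ne P 1),
      Projectivization.mk K (pbwPt x P 0) (h0ne P 0)),
      ⟨pbwPt x P 1, h0ne P 1, pbwPt x P 0, h0ne P 0, rfl,
        fun i j hij => pbwPt_rel x P c hrel 0 i j hij⟩⟩) ?_, ?_⟩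
  · -- soundness
    intro P P' hiso
    obtain ⟨a1, a0, ha1, ha0, h1, h0⟩ := ptPair_of_grIso x P P' hiso
    have e1 : Projectivization.mk K (pbwPt x P 1) (h0ne P 1) =
        Projectivization.mk K (pbwPt x P' 1) (h0ne P' 1) := by
      rw [Projectivization.mk_eq_mk_iff' K _ _ _ _]
      refine ⟨a1⁻¹, ?_⟩
      funext i
      simp only [Pi.smul_apply, smul_eq_mul]
      rw [h1 i, inv_mul_cancel_left₀ ha1]
    have e0 : Projectivization.mk K (pbwPt x P 0) (h0ne P 0) =
        Projectivization.mk K (pbwPt x P' 0) (h0ne P' 0) := by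
      rw [Projectivization.mk_eq_mk_iff' K _ _ _ _]
      refine ⟨a0⁻¹, ?_⟩
      funext i
      simp only [Pi.smul_apply, smul_eq_mul]
      rw [h0 i, inv_mul_cancel_left₀ ha0]
    exact Subtype.ext (Prod.ext_iff.mpr ⟨e1, e0⟩)
  · -- injectivity
    intro q1 q2 h
    revert h
    induction q1 using Quot.ind
    induction q2 using Quot.ind
    rename_i P P'
    intro h
    apply Quot.sound
    have hval := congrArg Subtype.val h
    have h0eq : Projectivization.mk K (pbwPt x P 0) (h0ne P 0) =
        Projectivization.mk K (pbwPt x P' 0) (h0ne P' 0) := congrArg Prod.snd hval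
    obtain ⟨a, ha⟩ := (Projectivization.mk_eq_mk_iff K _ _ _ _).mp h0eq
    have hmu : ∀ k : ℕ, ∃ m : K, m ≠ 0 ∧ ∀ i, pbwPt x P' k i = m * pbwPt x P k i := by
      intro k
      induction k with
      | zero =>
        refine ⟨(a : K)⁻¹, inv_ne_zero a.ne_zero, ?_⟩
        intro i
        have h2 : (a : K) * pbwPt x P' 0 i = pbwPt x P 0 i := by
          have := congrFun ha i
          simpa [Units.smul_def] using this
        rw [← h2, inv_mul_cancel_left₀ a.ne_zero]
      | succ k ihk =>
        obtain ⟨m, hm0, hmk⟩ := ihk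
        exact pt_step c hc (pbwPt x P k) (pbwPt x P (k+1)) (pbwPt x P' k)
          (pbwPt x P' (k+1)) (pbwPt_ne x P hspan k) (pbwPt_ne x P hspan (k+1))
          (pbwPt_ne x P' hspan (k+1))
          (fun i j hij => pbwPt_rel x P c hrel k i j hij)
          (fun i j hij => pbwPt_rel x P' c hrel k i j hij) m hm0 hmk
    choose μ hμ0 hμ using hmu
    exact grIso_of_mu x P P' μ hμ0 hμ
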